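/- Let p ≥ 1, m ≥ 0, and let g₁, g₂ : [m] → [p] be functions. In the single-leader captain network G_S(p,m,g₁,g₂), the core number of every captain equals the core number of the leader l. Moreover, if p ≥ 2 then this common value is p+1, and if p = 1 then every vertex of G_S(p,m,g₁,g₂) has core number exactly 2. -/

import Mathlib

/-- The core number of a vertex `v`: the largest `k` such that `v` belongs to a subgraph
in which every vertex has degree at least `k` within that subgraph (equivalently, an
induced subgraph with minimum degree at least `k`). -/
noncomputable def coreNumber {V : Type*} (G : SimpleGraph V) (v : V) : ℕ :=
  sSup {k : ℕ | ∃ s : Set V, v ∈ s ∧ ∀ w ∈ s, k ≤ (s ∩ G.neighborSet w).ncard}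

/-- Vertices of the single-leader captain network: the leader `l`, two groups of `p`
captains `C_{s,j}` (`s ∈ {1,2}`), and `m` remaining vertices `x_ℓ`. -/
inductive CSV (p m : ℕ) where
  | L : CSV p m
  | C : Fin 2 → Fin p → CSV p m
  | X : Fin m → CSV p m

/-- Generating relation of the single-leader captain network `G_S(p,m,g₁,g₂)` (with
`g = ![g₁, g₂]`): the leader is joined to every captain, the two captain groups form a
complete bipartite graph, and `x_ℓ` is joined to `C_{1,g₁(ℓ)}` and `C_{2,g₂(ℓ)}`. -/
def csRel {p m : ℕ} (g : Fin 2 → Fin m → Fin p) : CSV p m → CSV p m → Prop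
  | .L, .C _ _ => True
  | .C s _, .C s' _ => s ≠ s'
  | .X ℓ, .C s j => j = g s ℓ
  | _, _ => False

/-- The single-leader captain network `G_S(p,m,g₁,g₂)` (with `g = ![g₁, g₂]`). -/
def singleCaptainNetwork {p m : ℕ} (g : Fin 2 → Fin m → Fin p) : SimpleGraph (CSV p m) :=
  SimpleGraph.fromRel (csRel g)

namespace CSAux

instance {p m : ℕ} : Finite (CSV p m) := by
  have hsurj : Function.Surjective (fun x : (Unit ⊕ Fin 2 × Fin p) ⊕ Fin m =>
      match x with
      | .inl (.inl _) => (CSV.L : CSV p m)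
      | .inl (.inr (s, j)) => CSV.C s j
      | .inr ℓ => CSV.X ℓ) := by
    intro v
    cases v with
    | L => exact ⟨.inl (.inl ()), rfl⟩
    | C s j => exact ⟨.inl (.inr (s, j)), rfl⟩
    | X ℓ => exact ⟨.inr ℓ, rfl⟩
  exact Finite.of_surjective _ hsurj

/-- The defining set of the core number. -/
def coreSet {V : Type*} (G : SimpleGraph V) (v : V) : Set ℕ :=
  {k : ℕ | ∃ s : Set V, v ∈ s ∧ ∀ w ∈ s, k ≤ (s ∩ G.neighborSet w).ncard}

lemma coreNumber_eq_sSup {V : Type*} (G : SimpleGraph V) (v : V) :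
    coreNumber G v = sSup (coreSet G v) := rfl

lemma zero_mem_coreSet {V : Type*} (G : SimpleGraph V) (v : V) : 0 ∈ coreSet G v :=
  ⟨{v}, Set.mem_singleton v, fun _ _ => Nat.zero_le _⟩

lemma inj_le_ncard {α : Type*} [Finite α] {n : ℕ} (f : Fin n → α)
    (hf : Function.Injective f) {t : Set α} (ht : ∀ i, f i ∈ t) : n ≤ t.ncard := by
  have h1 : Set.range f ⊆ t := by rintro _ ⟨i, rfl⟩; exact ht i
  have h2 : (Set.range f).ncard = n := by
    rw [← Nat.card_coe_set_eq, Nat.card_range_of_injective hf, Nat.card_eq_fintype_card,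
      Fintype.card_fin]
  calc n = (Set.range f).ncard := h2.symm
    _ ≤ t.ncard := Set.ncard_le_ncard h1 t.toFinite

lemma fin2_add_one_ne (s : Fin 2) : s + 1 ≠ s := by revert s; decide

lemma fin2_ne_iff (s t : Fin 2) : t ≠ s ↔ t = s + 1 := by revert s t; decide

variable {p m : ℕ} (g : Fin 2 → Fin m → Fin p)

/-- Upper bound: every element of the core set of any vertex is at most `p+1`. -/
lemma coreSet_le (hp : 1 ≤ p) (v : CSV p m) {k : ℕ} (hk : k ∈ coreSet (singleCaptainNetwork g) v) :
    k ≤ p + 1 := by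
  by_contra hcon
  push_neg at hcon
  obtain ⟨s, hv, hs⟩ := hk
  -- no X vertex belongs to s
  have hnoX : ∀ ℓ : Fin m, CSV.X ℓ ∉ s := by
    intro ℓ hmem
    have h2 := hs _ hmem
    have hsub : s ∩ (singleCaptainNetwork g).neighborSet (CSV.X ℓ) ⊆
        {CSV.C 0 (g 0 ℓ), CSV.C 1 (g 1 ℓ)} := by
      rintro w ⟨-, hw⟩
      obtain ⟨hne, h⟩ := hw
      cases w with
      | L => simp [csRel] at h
      | X ℓ' => simp [csRel] at h
      | C t j =>
        simp [csRel] at h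
        subst h
        have : t = 0 ∨ t = 1 := by omega
        rcases this with rfl | rfl
        · exact Set.mem_insert _ _
        · exact Set.mem_insert_of_mem _ rfl
    have hle : (s ∩ (singleCaptainNetwork g).neighborSet (CSV.X ℓ)).ncard ≤ 2 := by
      refine le_trans (Set.ncard_le_ncard hsub (Set.toFinite _)) ?_
      refine le_trans (Set.ncard_insert_le _ _) ?_
      simp [Set.ncard_singleton]
    omega
  -- no captain belongs to s
  have hnoC : ∀ (t : Fin 2) (j : Fin p), CSV.C t j ∉ s := by
    intro t j hmem
    have h2 := hs _ hmem
    have hsub : s ∩ (singleCaptainNetwork g).neighborSet (CSV.C t j) ⊆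
        insert CSV.L (Set.range fun j' : Fin p => CSV.C (t + 1) j') := by
      rintro w ⟨hws, hw⟩
      obtain ⟨hne, h⟩ := hw
      cases w with
      | L => exact Set.mem_insert _ _
      | X ℓ' => exact absurd hws (hnoX ℓ')
      | C t' j' =>
        have ht' : t' ≠ t := by
          rcases h with h | h
          · simp [csRel] at h; exact fun hh => h hh.symm
          · simp [csRel] at h; exact h
        rw [fin2_ne_iff] at ht'
        subst ht'
        exact Set.mem_insert_of_mem _ ⟨j', rfl⟩
    have hrange : (Set.range fun j' : Fin p => CSV.C (t + 1) j' : Set (CSV p m)).ncard = p := by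
      have hinj : Function.Injective fun j' : Fin p => (CSV.C (t + 1) j' : CSV p m) := by
        intro a b hab
        simpa using hab
      rw [← Nat.card_coe_set_eq, Nat.card_range_of_injective hinj, Nat.card_eq_fintype_card,
        Fintype.card_fin]
    have hle : (s ∩ (singleCaptainNetwork g).neighborSet (CSV.C t j)).ncard ≤ p + 1 := by
      refine le_trans (Set.ncard_le_ncard hsub (Set.toFinite _)) ?_
      refine le_trans (Set.ncard_insert_le _ _) ?_
      rw [hrange]
    omega
  -- so v must be the leader, whose neighborhood in s is then empty
  cases v with
  | C t j => exact hnoC t j hv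
  | X ℓ => exact hnoX ℓ hv
  | L =>
    have h2 := hs _ hv
    have hempty : s ∩ (singleCaptainNetwork g).neighborSet CSV.L = ∅ := by
      ext w
      simp only [Set.mem_inter_iff, Set.mem_empty_iff_false, iff_false, not_and]
      intro hws hw
      obtain ⟨hne, h⟩ := hw
      cases w with
      | L => exact hne rfl
      | X ℓ' => exact hnoX ℓ' hws
      | C t j => exact hnoC t j hws
    rw [hempty] at h2
    simp at h2
    omega

lemma bddAbove_coreSet (hp : 1 ≤ p) (v : CSV p m) :
    BddAbove (coreSet (singleCaptainNetwork g) v) :=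
  ⟨p + 1, fun _ hk => coreSet_le g hp v hk⟩

lemma coreNumber_eq_of (hp : 1 ≤ p) (v : CSV p m) {n : ℕ}
    (hmem : n ∈ coreSet (singleCaptainNetwork g) v)
    (hub : ∀ k ∈ coreSet (singleCaptainNetwork g) v, k ≤ n) :
    coreNumber (singleCaptainNetwork g) v = n :=
  le_antisymm (csSup_le ⟨0, zero_mem_coreSet _ _⟩ hub)
    (le_csSup (bddAbove_coreSet g hp v) hmem)

/-- The witness set: the leader together with all captains. -/
def S : Set (CSV p m) := insert CSV.L (Set.range fun x : Fin 2 × Fin p => CSV.C x.1 x.2)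

lemma adj_L_C (t : Fin 2) (j : Fin p) :
    (singleCaptainNetwork g).Adj CSV.L (CSV.C t j) := by
  refine ⟨by simp, Or.inl ?_⟩
  simp [csRel]

lemma adj_C_C (t : Fin 2) (j j' : Fin p) :
    (singleCaptainNetwork g).Adj (CSV.C t j) (CSV.C (t + 1) j') := by
  refine ⟨?_, Or.inl ?_⟩
  · intro h
    injection h with h1 h2
    exact fin2_add_one_ne t h1.symm
  · show t ≠ t + 1
    exact fun h => fin2_add_one_ne t h.symm

lemma adj_X_C (ℓ : Fin m) (t : Fin 2) :
    (singleCaptainNetwork g).Adj (CSV.X ℓ) (CSV.C t (g t ℓ)) := by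
  refine ⟨by simp, Or.inl ?_⟩
  simp [csRel]

lemma hp_mem_S (hp : 1 ≤ p) :
    ∀ w ∈ (S : Set (CSV p m)),
      p + 1 ≤ ((S : Set (CSV p m)) ∩ (singleCaptainNetwork g).neighborSet w).ncard := by
  intro w hw
  rcases hw with rfl | ⟨⟨t, j⟩, rfl⟩
  · -- the leader: p captains from group 0 plus one from group 1
    set f : Fin (p + 1) → CSV p m := fun i =>
      if h : (i : ℕ) < p then CSV.C 0 ⟨i, h⟩ else CSV.C 1 ⟨0, hp⟩ with hf
    refine inj_le_ncard f ?_ ?_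
    · intro a b hab
      simp only [hf] at hab
      split_ifs at hab with h1 h2 h2
      · simp only [CSV.C.injEq, Fin.mk.injEq, true_and] at hab; omega
      · simp only [CSV.C.injEq] at hab; exact absurd hab.1 (by decide)
      · simp only [CSV.C.injEq] at hab; exact absurd hab.1 (by decide)
      · omega
    · intro i
      constructor
      · simp only [hf]
        split_ifs with h
        · exact Set.mem_insert_of_mem _ ⟨(0, ⟨(i : ℕ), h⟩), rfl⟩
        · exact Set.mem_insert_of_mem _ ⟨(1, ⟨0, hp⟩), rfl⟩
      · simp only [hf, SimpleGraph.mem_neighborSet]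
        split_ifs
        · exact adj_L_C g _ _
        · exact adj_L_C g _ _
  · -- a captain: the leader plus the p captains of the other group
    set f : Fin (p + 1) → CSV p m := fun i =>
      if h : (i : ℕ) < p then CSV.C (t + 1) ⟨i, h⟩ else CSV.L with hf
    refine inj_le_ncard f ?_ ?_
    · intro a b hab
      simp only [hf] at hab
      split_ifs at hab with h1 h2 h2 <;> simp_all [Fin.ext_iff] <;> omega
    · intro i
      constructor
      · simp only [hf]
        split_ifs with h
        · exact Set.mem_insert_of_mem _ ⟨(t + 1, ⟨(i : ℕ), h⟩), rfl⟩
        · exact Set.mem_insert _ _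
      · simp only [hf, SimpleGraph.mem_neighborSet]
        split_ifs
        · exact adj_C_C g t j _
        · exact ((singleCaptainNetwork g).adj_symm (adj_L_C g t j))

lemma core_L_C (hp : 1 ≤ p) :
    coreNumber (singleCaptainNetwork g) (CSV.L : CSV p m) = p + 1 ∧
      ∀ (t : Fin 2) (j : Fin p),
        coreNumber (singleCaptainNetwork g) (CSV.C t j) = p + 1 := by
  constructor
  · refine coreNumber_eq_of g hp _ ⟨S, Set.mem_insert _ _, hp_mem_S g hp⟩
      (fun k hk => coreSet_le g hp _ hk)
  · intro t j
    refine coreNumber_eq_of g hp _ ⟨S, Set.mem_insert_of_mem _ ⟨(t, j), rfl⟩, hp_mem_S g hp⟩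
      (fun k hk => coreSet_le g hp _ hk)

lemma two_mem_coreSet_X (hp : 1 ≤ p) (ℓ : Fin m) :
    2 ∈ coreSet (singleCaptainNetwork g) (CSV.X ℓ : CSV p m) := by
  refine ⟨insert (CSV.X ℓ) S, Set.mem_insert _ _, ?_⟩
  intro w hw
  have hSsub : ∀ u : CSV p m, u ∈ (S : Set (CSV p m)) →
      u ∈ insert (CSV.X ℓ) (S : Set (CSV p m)) := fun u hu => Set.mem_insert_of_mem _ hu
  rcases hw with rfl | hw
  · -- w = X ℓ : its two captain neighbors
    set f : Fin 2 → CSV p m := fun i => CSV.C i (g i ℓ) with hf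
    refine inj_le_ncard f ?_ ?_
    · intro a b hab
      simp only [hf, CSV.C.injEq] at hab
      exact hab.1
    · intro i
      exact ⟨hSsub _ (Set.mem_insert_of_mem _ ⟨(i, _), rfl⟩), adj_X_C g ℓ i⟩
  · rcases hw with rfl | ⟨⟨t, j⟩, rfl⟩
    · -- w = L: two captains
      set f : Fin 2 → CSV p m := fun i => CSV.C i ⟨0, hp⟩ with hf
      refine inj_le_ncard f ?_ ?_
      · intro a b hab
        simp only [hf, CSV.C.injEq] at hab
        exact hab.1
      · intro i
        exact ⟨hSsub _ (Set.mem_insert_of_mem _ ⟨(i, _), rfl⟩), adj_L_C g i _⟩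
    · -- w = C t j: the leader and a captain of the other group
      set f : Fin 2 → CSV p m := fun i =>
        if i = 0 then CSV.L else CSV.C (t + 1) ⟨0, hp⟩ with hf
      refine inj_le_ncard f ?_ ?_
      · intro a b hab
        simp only [hf] at hab
        split_ifs at hab with h1 h2 h2 <;> simp_all <;> omega
      · intro i
        simp only [hf]
        split_ifs
        · exact ⟨hSsub _ (Set.mem_insert _ _),
            ((singleCaptainNetwork g).adj_symm (adj_L_C g t j))⟩
        · exact ⟨hSsub _ (Set.mem_insert_of_mem _ ⟨(t + 1, _), rfl⟩), adj_C_C g t j _⟩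

end CSAux


/-- In the single-leader captain network with `p ≥ 1`: the core number of every captain
equals the core number of the leader; if `p ≥ 2` this common value is `p + 1`; and if
`p = 1` every vertex has core number exactly 2. -/
theorem stmt_17 {p m : ℕ} (hp : 1 ≤ p) (g₁ g₂ : Fin m → Fin p) :
    (∀ (s : Fin 2) (j : Fin p),
      coreNumber (singleCaptainNetwork ![g₁, g₂]) (CSV.C s j) =
      coreNumber (singleCaptainNetwork ![g₁, g₂]) CSV.L) ∧
    (2 ≤ p → coreNumber (singleCaptainNetwork ![g₁, g₂]) CSV.L = p + 1) ∧
    (p = 1 → ∀ v : CSV p m, coreNumber (singleCaptainNetwork ![g₁, g₂]) v = 2) := by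
  obtain ⟨hL, hC⟩ := CSAux.core_L_C ![g₁, g₂] hp
  refine ⟨fun s j => by rw [hC s j, hL], fun _ => hL, ?_⟩
  rintro rfl v
  cases v with
  | L => simpa using hL
  | C t j => simpa using hC t j
  | X ℓ =>
    exact CSAux.coreNumber_eq_of _ hp _ (CSAux.two_mem_coreSet_X _ hp ℓ)
      (fun k hk => CSAux.coreSet_le _ hp _ hk)
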